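/- Let φ be a substitution of constant length k. For every sequence x : ℤ → A, every m ≥ 1, and every word i = i₀⋯i_{m-1} over {0,…,k-1}, the sequence obtained by applying the letter-maps Ψ_{i_{m-1}} ∘ ⋯ ∘ Ψ_{i_0} coordinatewise to x equals the sequence n ↦ (φ^m(x))_{k^m·n + s}, where s = Σ_{l=0}^{m-1} i_{m-l-1}·k^l. -/

import Mathlib

/-- The extension of a substitution `φ : A → A*` to finite words, by concatenation. -/
def substWord {A : Type*} (φ : A → List A) (w : List A) : List A := w.flatMap φ

/-- The extension of a substitution of constant length `k` to biinfinite sequences: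
position `0` of the image is the start of `φ(x 0)`. -/
def substZ {A : Type*} [Inhabited A] (φ : A → List A) (k : ℕ) (x : ℤ → A) : ℤ → A :=
  fun n => (φ (x (Int.fdiv n (k : ℤ)))).getD (Int.fmod n (k : ℤ)).toNat default

/-- The shift `T^c` on biinfinite sequences (`T` is the left shift). -/
def shiftZ {A : Type*} (c : ℤ) (x : ℤ → A) : ℤ → A := fun n => x (n + c)

/-- The composition `Ψ_{i_{m-1}} ∘ ⋯ ∘ Ψ_{i_0}` of the column maps of a substitution of
constant length `k`, where `Ψ_i` sends a letter `a` to the `i`-th letter of `φ(a)`. -/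
def psiWord {A : Type*} [Inhabited A] (φ : A → List A) {m k : ℕ} (i : Fin m → Fin k) : A → A :=
  fun a => (List.ofFn i).foldl (fun b j => (φ b).getD (j : ℕ) default) a

/-- The `k`-kernel of a biinfinite sequence `x`: the set of subsequences
`n ↦ x (k^m * n + j)` for `m ≥ 0` and `0 ≤ j < k^m`. -/
def kernelK {A : Type*} (k : ℕ) (x : ℤ → A) : Set (ℤ → A) :=
  {y | ∃ (m j : ℕ), j < k ^ m ∧ y = fun n => x ((k : ℤ) ^ m * n + (j : ℤ))}

private lemma substZ_apply {A : Type*} [Inhabited A] (φ : A → List A) (k : ℕ)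
    (hk : 0 < k) (x : ℤ → A) (n : ℤ) (j : Fin k) :
    substZ φ k x ((k : ℤ) * n + (j : ℤ)) = (φ (x n)).getD (j : ℕ) default := by
  have hkz : (0:ℤ) < (k:ℤ) := by exact_mod_cast hk
  have hj0 : (0:ℤ) ≤ (j:ℤ) := by positivity
  have hjk : (j:ℤ) < (k:ℤ) := by exact_mod_cast j.isLt
  have hdiv : Int.fdiv ((k : ℤ) * n + (j : ℤ)) (k : ℤ) = n := by
    rw [Int.fdiv_eq_ediv_of_nonneg _ hkz.le, add_comm,
      Int.add_mul_ediv_left _ _ hkz.ne', Int.ediv_eq_zero_of_lt hj0 hjk]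
    ring
  have hmod : Int.fmod ((k : ℤ) * n + (j : ℤ)) (k : ℤ) = (j : ℤ) := by
    rw [Int.fmod_eq_emod_of_nonneg _ hkz.le, add_comm, Int.add_mul_emod_self_left,
      Int.emod_eq_of_lt hj0 hjk]
  simp [substZ, hdiv, hmod]

private lemma psiWord_aux {A : Type*} [Inhabited A] (φ : A → List A) (k : ℕ)
    (hk : 0 < k) (m : ℕ) :
    ∀ (x : ℤ → A) (i : Fin m → Fin k) (n : ℤ),
    psiWord φ i (x n)
      = (substZ φ k)^[m] x
          ((k : ℤ) ^ m * n + ∑ l : Fin m, ((i l.rev : ℕ) : ℤ) * (k : ℤ) ^ (l : ℕ)) := by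
  induction m with
  | zero => intro x i n; simp [psiWord]
  | succ m ih =>
    intro x i n
    have hfold : psiWord φ i (x n)
        = psiWord φ (fun l : Fin m => i l.succ) (substZ φ k x ((k:ℤ) * n + (i 0 : ℤ))) := by
      rw [substZ_apply φ k hk x n (i 0)]
      simp [psiWord, List.ofFn_succ]
    rw [hfold, ih (substZ φ k x) (fun l : Fin m => i l.succ) ((k:ℤ) * n + (i 0 : ℤ))]
    rw [Function.iterate_succ_apply]
    have hrev0 : (Fin.last m).rev = 0 := by
      ext; simp [Fin.rev]
    have hrev : ∀ l : Fin m, l.castSucc.rev = l.rev.succ := by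
      intro l; ext; simp [Fin.rev]; omega
    have harg : (k : ℤ) ^ m * ((k:ℤ) * n + (i 0 : ℤ))
          + ∑ l : Fin m, (((fun l : Fin m => i l.succ) l.rev : ℕ) : ℤ) * (k : ℤ) ^ (l : ℕ)
        = (k : ℤ) ^ (m+1) * n + ∑ l : Fin (m+1), ((i l.rev : ℕ) : ℤ) * (k : ℤ) ^ (l : ℕ) := by
      rw [Fin.sum_univ_castSucc, hrev0]
      have : ∑ l : Fin m, (((fun l : Fin m => i l.succ) l.rev : ℕ) : ℤ) * (k : ℤ) ^ (l : ℕ)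
          = ∑ l : Fin m, ((i l.castSucc.rev : ℕ) : ℤ) * (k : ℤ) ^ (l : ℕ) := by
        apply Finset.sum_congr rfl; intro l _; rw [hrev l]
      rw [this]
      simp only [Fin.coe_castSucc, Fin.val_last]
      ring
    rw [harg]

/-- For a substitution `φ` of constant length `k`, a biinfinite sequence `x`, `m ≥ 1`, and
a word `i = i₀⋯i_{m-1}` over `{0,…,k-1}`, applying `Ψ_{i_{m-1}} ∘ ⋯ ∘ Ψ_{i_0}`
coordinatewise to `x` yields the sequence `n ↦ (φ^m(x))_{k^m·n + s}` with
`s = Σ_{l<m} i_{m-l-1}·k^l`. -/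
theorem psiWord_apply_eq_subst_pow {A : Type*} [Inhabited A] (φ : A → List A) (k : ℕ)
    (hk : 0 < k) (hlen : ∀ a, (φ a).length = k) (x : ℤ → A) (m : ℕ) (hm : 1 ≤ m)
    (i : Fin m → Fin k) (n : ℤ) :
    psiWord φ i (x n)
      = (substZ φ k)^[m] x
          ((k : ℤ) ^ m * n + ∑ l : Fin m, ((i l.rev : ℕ) : ℤ) * (k : ℤ) ^ (l : ℕ)) := by
  exact psiWord_aux φ k hk m x i n
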